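/- For any real number Y and pairwise distinct real numbers λ₁,…,λ_{n+1}, ∑_{σ∈S_{n+1}} ∏_{k=1}^{n} (λ_{σ(k)} − Y)/(λ_{σ(k)} − λ_{σ(k+1)}) = 1. -/

import Mathlib

open Equiv Finset Polynomial

def decomposeFinLast {n : ℕ} : Perm (Fin (n+1)) ≃ Fin (n+1) × Perm (Fin n) :=
  ((Equiv.permCongr finSuccEquivLast).trans Equiv.Perm.decomposeOption).trans
    (Equiv.prodCongr finSuccEquivLast.symm (Equiv.refl _))

theorem decomposeFinLast_symm_apply_last {n : ℕ} (p : Fin (n+1)) (e : Perm (Fin n)) :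
    decomposeFinLast.symm (p, e) (Fin.last n) = p := by
  simp [decomposeFinLast]

theorem decomposeFinLast_symm_apply_castSucc {n : ℕ} (e : Perm (Fin n)) (p : Fin (n+1))
    (x : Fin n) :
    decomposeFinLast.symm (p, e) x.castSucc = Equiv.swap (Fin.last n) p (e x).castSucc := by
  refine Fin.lastCases ?_ ?_ p
  · simp [decomposeFinLast, EquivFunctor.map]
  · intro i
    by_cases h : e x = i
    · simp [h, decomposeFinLast, EquivFunctor.map]
    · simp [h, decomposeFinLast, EquivFunctor.map, swap_apply_def, Ne.symm h,
        (Fin.castSucc_lt_last (e x)).ne, Fin.castSucc_inj]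

theorem key : ∀ (n : ℕ) (Y : ℝ) (l : Fin (n+1) → ℝ), Function.Injective l →
    ∑ σ : Equiv.Perm (Fin (n+1)), ∏ k : Fin n,
      (l (σ k.castSucc) - Y) / (l (σ k.castSucc) - l (σ k.succ)) = 1 := by
  intro n
  induction n with
  | zero => intro Y l hl; simp
  | succ m ih =>
    intro Y l hl
    -- the sum as a function of Y
    set S : ℝ → ℝ := fun y => ∑ σ : Equiv.Perm (Fin (m+2)), ∏ k : Fin (m+1),
      (l (σ k.castSucc) - y) / (l (σ k.castSucc) - l (σ k.succ)) with hS
    show S Y = 1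
    have hden : ∀ (σ : Equiv.Perm (Fin (m+2))) (k : Fin (m+1)),
        l (σ k.castSucc) - l (σ k.succ) ≠ 0 := by
      intro σ k
      exact sub_ne_zero.mpr (hl.ne (σ.injective.ne (Fin.castSucc_lt_succ (i := k)).ne))
    -- Step 1 : S (l j) = 1 for every j
    have hSj : ∀ j : Fin (m+2), S (l j) = 1 := by
      intro j
      have := (Equiv.sum_comp decomposeFinLast.symm (fun σ : Equiv.Perm (Fin (m+2)) =>
        ∏ k : Fin (m+1), (l (σ k.castSucc) - l j) / (l (σ k.castSucc) - l (σ k.succ))))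
      rw [hS]
      dsimp only
      rw [← this, Fintype.sum_prod_type]
      rw [Finset.sum_eq_single_of_mem j (Finset.mem_univ j)]
      · -- the fiber over j
        set σ0 : Equiv.Perm (Fin (m+1)) → Equiv.Perm (Fin (m+2)) :=
          fun e => decomposeFinLast.symm (j, e) with hσ0
        set l' : Fin (m+1) → ℝ := fun i => l (Equiv.swap (Fin.last (m+1)) j i.castSucc) with hl'
        have hl'inj : Function.Injective l' :=
          hl.comp ((Equiv.injective _).comp (Fin.castSucc_injective _))
        have hterm : ∀ e : Equiv.Perm (Fin (m+1)),
            (∏ k : Fin (m+1), (l (σ0 e k.castSucc) - l j) /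
              (l (σ0 e k.castSucc) - l (σ0 e k.succ))) =
            ∏ k : Fin m, (l' (e k.castSucc) - l j) / (l' (e k.castSucc) - l' (e k.succ)) := by
          intro e
          rw [Fin.prod_univ_castSucc]
          have hlast : (l (σ0 e (Fin.last m).castSucc) - l j) /
              (l (σ0 e (Fin.last m).castSucc) - l (σ0 e (Fin.last m).succ)) = 1 := by
            rw [Fin.succ_last, hσ0]
            simp only [decomposeFinLast_symm_apply_last]
            exact div_self (by
              have hne2 : decomposeFinLast.symm (j, e) (Fin.last m).castSucc ≠ j := by
                intro h
                have h' := h.trans (decomposeFinLast_symm_apply_last j e).symm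
                exact (Fin.castSucc_lt_last (Fin.last m)).ne (Equiv.injective _ h')
              exact sub_ne_zero.mpr (hl.ne hne2))
          rw [hlast, mul_one]
          refine Finset.prod_congr rfl fun k _ => ?_
          have h1 : σ0 e (k.castSucc).castSucc = Equiv.swap (Fin.last (m+1)) j
              (e k.castSucc).castSucc := decomposeFinLast_symm_apply_castSucc e j k.castSucc
          have h2 : σ0 e (k.castSucc).succ = Equiv.swap (Fin.last (m+1)) j
              (e k.succ).castSucc := by
            rw [Fin.succ_castSucc]
            exact decomposeFinLast_symm_apply_castSucc e j k.succ
          rw [h1, h2]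
        calc (∑ e : Equiv.Perm (Fin (m+1)), ∏ k : Fin (m+1),
              (l (decomposeFinLast.symm (j, e) k.castSucc) - l j) /
              (l (decomposeFinLast.symm (j, e) k.castSucc) -
                l (decomposeFinLast.symm (j, e) k.succ)))
            = ∑ e : Equiv.Perm (Fin (m+1)), ∏ k : Fin m,
              (l' (e k.castSucc) - l j) / (l' (e k.castSucc) - l' (e k.succ)) :=
              Finset.sum_congr rfl fun e _ => hterm e
          _ = 1 := ih (l j) l' hl'inj
      · -- other fibers vanish
        intro p _ hp
        refine Finset.sum_eq_zero fun e _ => ?_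
        set σ := decomposeFinLast.symm (p, e) with hσ
        have hne : σ.symm j ≠ Fin.last (m+1) := by
          intro h
          apply hp
          have := decomposeFinLast_symm_apply_last p e
          rw [← hσ] at this
          rw [← this, ← h, Equiv.apply_symm_apply]
        obtain ⟨k0, hk0⟩ : ∃ k0 : Fin (m+1), σ.symm j = k0.castSucc :=
          ⟨(σ.symm j).castLT (Fin.val_lt_last hne), by simp [Fin.castSucc, Fin.castLT]⟩
        refine Finset.prod_eq_zero (Finset.mem_univ k0) ?_
        have : σ k0.castSucc = j := by rw [← hk0, Equiv.apply_symm_apply]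
        rw [this, sub_self, zero_div]
    -- Step 2 : polynomial argument
    set P : Polynomial ℝ := ∑ σ : Equiv.Perm (Fin (m+2)),
      Polynomial.C ((∏ k : Fin (m+1), (l (σ k.castSucc) - l (σ k.succ)))⁻¹) *
        ∏ k : Fin (m+1), (Polynomial.C (l (σ k.castSucc)) - Polynomial.X) with hP
    have hPeval : ∀ y : ℝ, P.eval y = S y := by
      intro y
      rw [hP, hS]
      rw [Polynomial.eval_finset_sum]
      refine Finset.sum_congr rfl fun σ _ => ?_
      rw [Polynomial.eval_mul, Polynomial.eval_C, Polynomial.eval_prod]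
      simp only [Polynomial.eval_sub, Polynomial.eval_C, Polynomial.eval_X]
      rw [Finset.prod_div_distrib, div_eq_mul_inv, mul_comm]
    have hPdeg : P.natDegree ≤ m + 1 := by
      rw [hP]
      refine Polynomial.natDegree_sum_le_of_forall_le _ _ fun σ _ => ?_
      refine le_trans (Polynomial.natDegree_C_mul_le _ _) ?_
      refine le_trans (Polynomial.natDegree_prod_le _ _) ?_
      have : ∀ k : Fin (m+1),
          (Polynomial.C (l (σ k.castSucc)) - Polynomial.X : Polynomial ℝ).natDegree = 1 := by
        intro k
        have : (Polynomial.C (l (σ k.castSucc)) - Polynomial.X : Polynomial ℝ) =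
            -(Polynomial.X - Polynomial.C (l (σ k.castSucc))) := by ring
        rw [this, Polynomial.natDegree_neg, Polynomial.natDegree_X_sub_C]
      refine le_of_eq ?_
      calc (∑ k : Fin (m+1),
            (Polynomial.C (l (σ k.castSucc)) - Polynomial.X : Polynomial ℝ).natDegree)
          = ∑ _k : Fin (m+1), 1 := Finset.sum_congr rfl fun k _ => this k
        _ = m + 1 := by simp
    have hQ : P - Polynomial.C 1 = 0 := by
      refine Polynomial.eq_zero_of_natDegree_lt_card_of_eval_eq_zero _ hl ?_ ?_
      · intro i
        rw [Polynomial.eval_sub, Polynomial.eval_C, hPeval, hSj, sub_self]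
      · refine lt_of_le_of_lt (Polynomial.natDegree_sub_le _ _) ?_
        rw [Polynomial.natDegree_C]
        simp only [Fintype.card_fin]
        omega
    have : P = Polynomial.C 1 := by linear_combination (norm := ring_nf) hQ
    calc S Y = P.eval Y := (hPeval Y).symm
      _ = 1 := by rw [this, Polynomial.eval_C]

theorem stmt3 (n : ℕ) (Y : ℝ) (l : Fin (n+1) → ℝ) (hl : Function.Injective l) :
    ∑ σ : Equiv.Perm (Fin (n+1)), ∏ k : Fin n,
      (l (σ k.castSucc) - Y) / (l (σ k.castSucc) - l (σ k.succ)) = 1 :=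
  key n Y l hl
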